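/- On the complete graph K_n, the extended hitting time between any two intermediate states of the non-atomic walk is O(n²); more precisely H̃(s_{ab}, s_{cd}) = 1 + H̃(b,c) + H̃(c, s_{cd}) where H̃(b,c) = O(n) and H̃(c, s_{cd}) = Θ(n²). -/

import Mathlib

open Finset

/-- State space of the non-atomic walk: original vertices plus directed intermediate states. -/
def NAState (V : Type*) (G : SimpleGraph V) : Type _ :=
  V ⊕ {p : V × V // G.Adj p.1 p.2}

namespace NAState

variable {V : Type*} {G : SimpleGraph V}

/-- Original-vertex state. -/
def orig (v : V) : NAState V G := Sum.inl v

/-- Intermediate state `s_{ab}`, directed from `a` to `b`. -/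
def intm (a b : V) (h : G.Adj a b) : NAState V G := Sum.inr ⟨(a, b), h⟩

/-- Direction reversal: fixes original vertices, reverses intermediate states. -/
def bar : NAState V G → NAState V G
  | Sum.inl v => Sum.inl v
  | Sum.inr ⟨(a, b), h⟩ => Sum.inr ⟨(b, a), h.symm⟩

variable [Fintype V] [DecidableRel G.Adj]

/-- The number `d_s` of adjacent states of a state. -/
def asDeg : NAState V G → ℝ
  | Sum.inl v => (G.degree v : ℝ)
  | Sum.inr _ => 1

/-- Sum of `f` over the adjacent states `N_as(s)` of a state. -/
def asSum (f : NAState V G → ℝ) : NAState V G → ℝ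
  | Sum.inl v => ∑ w ∈ (G.neighborFinset v).attach,
      f (Sum.inr ⟨(v, w.1), (G.mem_neighborFinset _ _).mp w.2⟩)
  | Sum.inr ⟨(_, b), _⟩ => f (Sum.inl b)

end NAState

section helpers

variable {n : ℕ} [inst : DecidableRel (⊤ : SimpleGraph (Fin n)).Adj]

lemma nbr_top (v : Fin n) :
    (⊤ : SimpleGraph (Fin n)).neighborFinset v = Finset.univ.erase v := by
  ext w
  simp [SimpleGraph.mem_neighborFinset, ne_comm]

lemma asSum_top (f : NAState (Fin n) (⊤ : SimpleGraph (Fin n)) → ℝ) (v : Fin n) :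
    NAState.asSum f (NAState.orig v) =
      ∑ w ∈ Finset.univ.erase v,
        (if h : (⊤ : SimpleGraph (Fin n)).Adj v w then f (NAState.intm v w h) else 0) := by
  have h0 : NAState.asSum f (NAState.orig v) =
      ∑ w ∈ ((⊤ : SimpleGraph (Fin n)).neighborFinset v).attach,
        f (Sum.inr ⟨(v, w.1),
          ((⊤ : SimpleGraph (Fin n)).mem_neighborFinset _ _).mp w.2⟩) := rfl
  rw [h0, ← nbr_top v, ← Finset.sum_attach ((⊤ : SimpleGraph (Fin n)).neighborFinset v)
    (fun w => if h : (⊤ : SimpleGraph (Fin n)).Adj v w then f (NAState.intm v w h) else 0)]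
  refine Finset.sum_congr rfl fun w _ => ?_
  rw [dif_pos (((⊤ : SimpleGraph (Fin n)).mem_neighborFinset _ _).mp w.2)]
  rfl

end helpers

theorem stmt16 (n : ℕ) (hn : 2 ≤ n)
    [inst : DecidableRel (⊤ : SimpleGraph (Fin n)).Adj]
    (Ht : NAState (Fin n) (⊤ : SimpleGraph (Fin n)) →
      NAState (Fin n) (⊤ : SimpleGraph (Fin n)) → ℝ)
    (hHt0 : ∀ s, Ht s s = 0)
    (hHtorig : ∀ (v : Fin n) (s : NAState (Fin n) (⊤ : SimpleGraph (Fin n))),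
      NAState.orig v ≠ s →
      Ht (NAState.orig v) s =
        1 + (1 / ((⊤ : SimpleGraph (Fin n)).degree v : ℝ)) *
          NAState.asSum (fun z => Ht z s) (NAState.orig v))
    (hHtintm : ∀ (a b : Fin n) (h : (⊤ : SimpleGraph (Fin n)).Adj a b)
      (s : NAState (Fin n) (⊤ : SimpleGraph (Fin n))), NAState.intm a b h ≠ s →
      Ht (NAState.intm a b h) s = 1 + Ht (NAState.orig b) s)
    (a b c d : Fin n) (hab : (⊤ : SimpleGraph (Fin n)).Adj a b)
    (hcd : (⊤ : SimpleGraph (Fin n)).Adj c d) (hne : (a, b) ≠ (c, d)) :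
    Ht (NAState.intm a b hab) (NAState.intm c d hcd) =
        1 + Ht (NAState.orig b) (NAState.orig c) + Ht (NAState.orig c) (NAState.intm c d hcd) ∧
      (b ≠ c → Ht (NAState.orig b) (NAState.orig c) = 2 * ((n : ℝ) - 1)) ∧
      Ht (NAState.orig c) (NAState.intm c d hcd) =
        2 * ((n : ℝ) - 1) - 1 + ((n : ℝ) - 2) * (2 * ((n : ℝ) - 1)) := by
  set N : ℝ := (n : ℝ) with hNdef
  have hN2 : (2 : ℝ) ≤ N := by rw [hNdef]; exact_mod_cast hn
  have hN0 : N ≠ 0 := by linarith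
  have hN1 : N - 1 ≠ 0 := by linarith
  -- degree of every vertex is N - 1
  have hdeg : ∀ v : Fin n, (((⊤ : SimpleGraph (Fin n)).degree v : ℝ)) = N - 1 := by
    intro v
    have h1 : (⊤ : SimpleGraph (Fin n)).degree v = n - 1 := by
      show ((⊤ : SimpleGraph (Fin n)).neighborFinset v).card = n - 1
      rw [nbr_top, Finset.card_erase_of_mem (Finset.mem_univ v), Finset.card_univ,
        Fintype.card_fin]
    rw [h1, Nat.cast_sub (by omega : 1 ≤ n), Nat.cast_one]
  -- cardinality of erase
  have hconst : ∀ v : Fin n, (∑ _w ∈ Finset.univ.erase v, (1 : ℝ)) = N - 1 := by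
    intro v
    rw [Finset.sum_const, Finset.card_erase_of_mem (Finset.mem_univ v), Finset.card_univ,
      Fintype.card_fin, nsmul_eq_mul, mul_one, Nat.cast_sub (by omega : 1 ≤ n), Nat.cast_one]
  -- the basic recurrence for original vertices
  have hrec : ∀ (v : Fin n) (s : NAState (Fin n) (⊤ : SimpleGraph (Fin n))),
      NAState.orig v ≠ s →
      (N - 1) * Ht (NAState.orig v) s =
        (N - 1) + ∑ w ∈ Finset.univ.erase v,
          (if h : (⊤ : SimpleGraph (Fin n)).Adj v w then Ht (NAState.intm v w h) s else 0) := by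
    intro v s hvs
    rw [hHtorig v s hvs, asSum_top, hdeg]
    field_simp
  -- intm states are never equal to orig states
  have hio : ∀ (u w : Fin n) (h : (⊤ : SimpleGraph (Fin n)).Adj u w) (x : Fin n),
      NAState.intm u w h ≠ (NAState.orig x : NAState (Fin n) (⊤ : SimpleGraph (Fin n))) := by
    intro u w h x
    simp [NAState.intm, NAState.orig]
    exact Sum.inr_ne_inl
  have hoi : ∀ (x : Fin n) (u w : Fin n) (h : (⊤ : SimpleGraph (Fin n)).Adj u w),
      (NAState.orig x : NAState (Fin n) (⊤ : SimpleGraph (Fin n))) ≠ NAState.intm u w h := by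
    intro x u w h
    simp [NAState.intm, NAState.orig]
    exact Sum.inl_ne_inr
  have hii : ∀ (u w : Fin n) (h : (⊤ : SimpleGraph (Fin n)).Adj u w), (u, w) ≠ (c, d) →
      NAState.intm u w h ≠ NAState.intm c d hcd := by
    intro u w h huw heq
    have h2 : (Sum.inr ⟨(u, w), h⟩ : NAState (Fin n) (⊤ : SimpleGraph (Fin n))) =
        Sum.inr ⟨(c, d), hcd⟩ := heq
    exact huw (congrArg Subtype.val (Sum.inr.inj h2))
  ------------------------------------------------------------------
  -- First system : H v = Ht (orig v) (orig c)
  ------------------------------------------------------------------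
  set H : Fin n → ℝ := fun v => Ht (NAState.orig v) (NAState.orig c) with hHdef
  set S : ℝ := ∑ v, H v with hSdef
  have hHeq : ∀ v : Fin n, v ≠ c → N * H v = 2 * (N - 1) + S := by
    intro v hvc
    have hne' : (NAState.orig v : NAState (Fin n) (⊤ : SimpleGraph (Fin n))) ≠
        NAState.orig c := fun h => hvc (Sum.inl.inj h)
    have h1 := hrec v _ hne'
    have h2 : (∑ w ∈ Finset.univ.erase v,
        (if h : (⊤ : SimpleGraph (Fin n)).Adj v w
          then Ht (NAState.intm v w h) (NAState.orig c) else 0)) =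
        (N - 1) + (S - H v) := by
      have h3 : ∀ w ∈ Finset.univ.erase v,
          (if h : (⊤ : SimpleGraph (Fin n)).Adj v w
            then Ht (NAState.intm v w h) (NAState.orig c) else 0) = 1 + H w := by
        intro w hw
        have hvw : v ≠ w := (Finset.ne_of_mem_erase hw).symm
        rw [dif_pos ((SimpleGraph.top_adj v w).mpr hvw)]
        exact hHtintm v w _ _ (hio v w _ c)
      rw [Finset.sum_congr rfl h3, Finset.sum_add_distrib, hconst,
        Finset.sum_erase_eq_sub (Finset.mem_univ v)]
    rw [h2] at h1
    linear_combination h1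
  have hSsum : N * S = (N - 1) * (2 * (N - 1) + S) := by
    have h1 : (∑ v ∈ Finset.univ.erase c, (N * H v)) =
        ∑ _v ∈ Finset.univ.erase c, (2 * (N - 1) + S) :=
      Finset.sum_congr rfl fun v hv => hHeq v (Finset.ne_of_mem_erase hv)
    rw [← Finset.mul_sum, Finset.sum_erase_eq_sub (Finset.mem_univ c), Finset.sum_const,
      Finset.card_erase_of_mem (Finset.mem_univ c), Finset.card_univ, Fintype.card_fin,
      nsmul_eq_mul, Nat.cast_sub (by omega : 1 ≤ n), Nat.cast_one] at h1
    have hc0 : H c = 0 := hHt0 _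
    rw [hc0, sub_zero] at h1
    rw [h1]
  have hSval : S = 2 * (N - 1) ^ 2 := by linear_combination hSsum
  have hHval : ∀ v : Fin n, v ≠ c → H v = 2 * (N - 1) := by
    intro v hv
    refine mul_left_cancel₀ hN0 ?_
    linear_combination hHeq v hv + hSval
  ------------------------------------------------------------------
  -- Second system : Y v = Ht (orig v) (intm c d)
  ------------------------------------------------------------------
  set Y : Fin n → ℝ := fun v => Ht (NAState.orig v) (NAState.intm c d hcd) with hYdef
  set T : ℝ := ∑ v, Y v with hTdef
  have hdc : d ≠ c := fun h => ((SimpleGraph.top_adj c d).mp hcd) h.symm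
  have hYeq : ∀ v : Fin n, v ≠ c → N * Y v = 2 * (N - 1) + T := by
    intro v hvc
    have h1 := hrec v _ (hoi v c d hcd)
    have h2 : (∑ w ∈ Finset.univ.erase v,
        (if h : (⊤ : SimpleGraph (Fin n)).Adj v w
          then Ht (NAState.intm v w h) (NAState.intm c d hcd) else 0)) =
        (N - 1) + (T - Y v) := by
      have h3 : ∀ w ∈ Finset.univ.erase v,
          (if h : (⊤ : SimpleGraph (Fin n)).Adj v w
            then Ht (NAState.intm v w h) (NAState.intm c d hcd) else 0) = 1 + Y w := by
        intro w hw
        have hvw : v ≠ w := (Finset.ne_of_mem_erase hw).symm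
        rw [dif_pos ((SimpleGraph.top_adj v w).mpr hvw)]
        exact hHtintm v w _ _ (hii v w _ (by simp [Prod.ext_iff, hvc]))
      rw [Finset.sum_congr rfl h3, Finset.sum_add_distrib, hconst,
        Finset.sum_erase_eq_sub (Finset.mem_univ v)]
    rw [h2] at h1
    linear_combination h1
  have hYceq : N * Y c = 2 * N - 3 + T - Y d := by
    have h1 := hrec c _ (hoi c c d hcd)
    have h2 : (∑ w ∈ Finset.univ.erase c,
        (if h : (⊤ : SimpleGraph (Fin n)).Adj c w
          then Ht (NAState.intm c w h) (NAState.intm c d hcd) else 0)) =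
        ((N - 1) + (T - Y c)) - (1 + Y d) := by
      have h3 : ∀ w ∈ Finset.univ.erase c,
          (if h : (⊤ : SimpleGraph (Fin n)).Adj c w
            then Ht (NAState.intm c w h) (NAState.intm c d hcd) else 0) =
          (1 + Y w) - (if w = d then 1 + Y w else 0) := by
        intro w hw
        have hcw : c ≠ w := (Finset.ne_of_mem_erase hw).symm
        rw [dif_pos ((SimpleGraph.top_adj c w).mpr hcw)]
        by_cases hwd : w = d
        · subst hwd
          rw [if_pos rfl]
          have : NAState.intm c w ((SimpleGraph.top_adj c w).mpr hcw) =
              NAState.intm c w hcd := rfl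
          rw [this, hHt0]
          ring
        · rw [if_neg hwd]
          rw [hHtintm c w _ _ (hii c w _ (by simp [Prod.ext_iff, hwd]))]
          ring
      rw [Finset.sum_congr rfl h3, Finset.sum_sub_distrib, Finset.sum_add_distrib, hconst,
        Finset.sum_erase_eq_sub (Finset.mem_univ c),
        Finset.sum_ite_eq' (Finset.univ.erase c) d (fun w => 1 + Y w),
        if_pos (Finset.mem_erase.mpr ⟨hdc, Finset.mem_univ d⟩)]
    rw [h2] at h1
    linear_combination h1
  have hTeq : N * (T - Y c) = (N - 1) * (2 * (N - 1) + T) := by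
    have h1 : (∑ v ∈ Finset.univ.erase c, (N * Y v)) =
        ∑ _v ∈ Finset.univ.erase c, (2 * (N - 1) + T) :=
      Finset.sum_congr rfl fun v hv => hYeq v (Finset.ne_of_mem_erase hv)
    rw [← Finset.mul_sum, Finset.sum_erase_eq_sub (Finset.mem_univ c), Finset.sum_const,
      Finset.card_erase_of_mem (Finset.mem_univ c), Finset.card_univ, Fintype.card_fin,
      nsmul_eq_mul, Nat.cast_sub (by omega : 1 ≤ n), Nat.cast_one] at h1
    rw [h1]
  have hYd := hYeq d hdc
  have hYcval : Y c = 2 * (N - 1) - 1 + (N - 2) * (2 * (N - 1)) := by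
    refine mul_left_cancel₀ hN0 ?_
    linear_combination (-1 : ℝ) * hYd + N * hYceq + (N - 1) * hTeq
  have hTval : T = N * Y c + 2 * (N - 1) ^ 2 := by linear_combination hTeq
  -- Y b = H b + Y c in all cases
  have hYb : Y b = H b + Y c := by
    by_cases hbc : b = c
    · subst hbc
      have h0 : H b = 0 := hHt0 _
      rw [h0]
      ring
    · have h1 := hYeq b hbc
      have h2 := hHval b hbc
      refine mul_left_cancel₀ hN0 ?_
      rw [h2]
      linear_combination h1 + hTval
  refine ⟨?_, fun hbc => hHval b hbc, hYcval⟩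
  rw [hHtintm a b hab _ (hii a b hab hne)]
  show (1 : ℝ) + Y b = 1 + H b + Y c
  rw [hYb]
  ring
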